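/- For k ≥ 2, in the graph B_{k+2} (two cycles of length k+3 sharing one edge), every (k+1)-tuple with pairwise distinct entries inducing a connected subgraph has no local (k+1)-neighbor with pairwise distinct entries inducing a connected subgraph on k+1 distinct vertices such that the resulting tuple together with the replaced vertex covers a full cycle; in contrast, in A_{k+2} the tuple (a_1,…,a_{k+1}) along a (k+2)-cycle has a local (k+1)-neighbor whose entries are pairwise distinct. -/

import Mathlib

open SimpleGraph Function

/-- The graph `A_{k+2}`: two disjoint `(k+2)`-cycles, on vertices `0,…,k+1` and
`k+2,…,2k+3`, joined by the single edge `(k+1, k+2)`. -/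
def graphA (k : ℕ) : SimpleGraph (Fin (2 * (k + 2))) :=
  SimpleGraph.fromRel (fun a b =>
    (b.val = a.val + 1 ∧ b.val ≤ k + 1) ∨
    (a.val = 0 ∧ b.val = k + 1) ∨
    (b.val = a.val + 1 ∧ k + 2 ≤ a.val ∧ b.val ≤ 2 * k + 3) ∨
    (a.val = k + 2 ∧ b.val = 2 * k + 3) ∨
    (a.val = k + 1 ∧ b.val = k + 2))

/-- The graph `B_{k+2}`: two `(k+3)`-cycles sharing exactly one edge, realized as the
cycle `0,1,…,2k+3,0` together with the chord `(0, k+2)`. -/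
def graphB (k : ℕ) : SimpleGraph (Fin (2 * (k + 2))) :=
  SimpleGraph.fromRel (fun a b =>
    (b.val = a.val + 1 ∧ b.val ≤ 2 * k + 3) ∨
    (a.val = 0 ∧ b.val = 2 * k + 3) ∨
    (a.val = 0 ∧ b.val = k + 2))

/-- A tuple induces a connected subgraph. -/
def InducesConnected {V : Type*} (G : SimpleGraph V) {m : ℕ} (v : Fin m → V) : Prop :=
  (G.induce (Set.range v)).Connected

/-- The set `S` is the vertex set of a cycle of the graph `G`. -/
def CoversCycle {V : Type*} (G : SimpleGraph V) (S : Set V) : Prop :=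
  ∃ (a : V) (c : G.Walk a a), c.IsCycle ∧ {z | z ∈ c.support} = S



lemma ncard_range_fin {m : ℕ} {α : Type*} (f : Fin m → α) (hf : Function.Injective f) :
    (Set.range f).ncard = m := by
  rw [← Set.image_univ, Set.ncard_image_of_injective _ hf, Set.ncard_univ]
  simp

lemma cycle_two_nbrs {V : Type*} [DecidableEq V] {G : SimpleGraph V} {a : V}
    {c : G.Walk a a} (hc : c.IsCycle) {w : V} (hw : w ∈ c.support) :
    ∃ x y, x ≠ y ∧ c.toSubgraph.Adj w x ∧ c.toSubgraph.Adj w y := by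
  obtain ⟨c', hc', hts⟩ : ∃ c' : G.Walk w w, c'.IsCycle ∧ c'.toSubgraph = c.toSubgraph :=
    ⟨c.rotate w hw, hc.rotate hw, c.toSubgraph_rotate hw⟩
  rw [← hts]
  have hlen := hc'.three_le_length
  cases c' with
  | nil => simp at hlen
  | @cons _ b _ h q =>
    have hq : q.IsPath := ((SimpleGraph.Walk.cons_isCycle_iff q h).mp hc').1
    simp only [SimpleGraph.Walk.length_cons] at hlen
    cases q with
    | nil => simp at hlen
    | @cons _ b2 _ h2 p =>
      simp only [SimpleGraph.Walk.length_cons] at hlen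
      set l := p.length with hl
      have hl1 : 1 ≤ l := by omega
      set y := p.getVert (l - 1) with hy
      have hbp : b ∉ p.support := ((SimpleGraph.Walk.cons_isPath_iff h2 p).mp hq).2
      have hyp : y ∈ p.support :=
        SimpleGraph.Walk.mem_support_iff_exists_getVert.mpr ⟨l - 1, rfl, by omega⟩
      refine ⟨b, y, fun hby => hbp (hby ▸ hyp), ?_, ?_⟩
      · have := SimpleGraph.Walk.toSubgraph_adj_getVert (SimpleGraph.Walk.cons h (SimpleGraph.Walk.cons h2 p))
          (i := 0) (by simp)
        simpa using this
      · have := SimpleGraph.Walk.toSubgraph_adj_getVert (SimpleGraph.Walk.cons h (SimpleGraph.Walk.cons h2 p))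
          (i := l + 1) (by simp only [SimpleGraph.Walk.length_cons]; omega)
        have e1 : (SimpleGraph.Walk.cons h (SimpleGraph.Walk.cons h2 p)).getVert (l + 1)
            = p.getVert (l - 1) := by
          rw [SimpleGraph.Walk.getVert_cons_succ,
            SimpleGraph.Walk.getVert_cons _ _ (by omega)]
        have e2 : (SimpleGraph.Walk.cons h (SimpleGraph.Walk.cons h2 p)).getVert (l + 1 + 1)
            = w := by
          rw [SimpleGraph.Walk.getVert_cons_succ, SimpleGraph.Walk.getVert_cons_succ]
          exact p.getVert_length
        rw [e1, e2] at this
        exact this.symm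

lemma graphB_nbr {k : ℕ} {a b : Fin (2 * (k + 2))} (h : (graphB k).Adj a b) :
    a.val ≠ b.val ∧ b.val < 2 * (k + 2) ∧ a.val < 2 * (k + 2) ∧
    ((b.val = a.val + 1 ∧ b.val ≤ 2 * k + 3) ∨ (a.val = 0 ∧ b.val = 2 * k + 3) ∨
     (a.val = 0 ∧ b.val = k + 2) ∨
     (a.val = b.val + 1 ∧ a.val ≤ 2 * k + 3) ∨ (b.val = 0 ∧ a.val = 2 * k + 3) ∨
     (b.val = 0 ∧ a.val = k + 2)) := by
  rw [graphB, SimpleGraph.fromRel_adj] at h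
  obtain ⟨hne, h⟩ := h
  exact ⟨fun hv => hne (Fin.ext hv), b.isLt, a.isLt, by tauto⟩

lemma nbr1 {k : ℕ} {a b : Fin (2 * (k + 2))} (h : (graphB k).Adj a b)
    (h1 : 1 ≤ a.val) (h2 : a.val ≤ k + 1) : b.val = a.val - 1 ∨ b.val = a.val + 1 := by
  have := graphB_nbr h; omega

lemma nbr2 {k : ℕ} {a b : Fin (2 * (k + 2))} (h : (graphB k).Adj a b)
    (h1 : k + 3 ≤ a.val) (h2 : a.val ≤ 2 * k + 2) : b.val = a.val - 1 ∨ b.val = a.val + 1 := by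
  have := graphB_nbr h; omega

lemma nbr3 {k : ℕ} {a b : Fin (2 * (k + 2))} (h : (graphB k).Adj a b)
    (h1 : a.val = 2 * k + 3) : b.val = 2 * k + 2 ∨ b.val = 0 := by
  have := graphB_nbr h; omega

/-- For `k ≥ 2`: in `B_{k+2}` no `(k+1)`-tuple with pairwise distinct
entries inducing a connected subgraph has a local `(k+1)`-neighbor with pairwise
distinct entries inducing a connected subgraph on `k+1` distinct vertices such that the
new tuple together with the replaced vertex covers a full cycle; in contrast, in
`A_{k+2}` some `(k+1)`-tuple with pairwise distinct entries inducing a connected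
subgraph has a local `(k+1)`-neighbor whose entries are pairwise distinct. -/
theorem graphB_no_cycle_closing_neighbor_graphA_has (k : ℕ) (hk : 2 ≤ k) :
    (∀ v : Fin (k + 1) → Fin (2 * (k + 2)),
        Function.Injective v → InducesConnected (graphB k) v →
        ¬ ∃ x, (graphB k).Adj (v (Fin.last k)) x ∧
            Function.Injective (Function.update v (Fin.last k) x) ∧
            InducesConnected (graphB k) (Function.update v (Fin.last k) x) ∧
            CoversCycle (graphB k)
              (Set.range (Function.update v (Fin.last k) x) ∪ {v (Fin.last k)})) ∧
    (∃ v : Fin (k + 1) → Fin (2 * (k + 2)),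
        Function.Injective v ∧ InducesConnected (graphA k) v ∧
        ∃ x, (graphA k).Adj (v (Fin.last k)) x ∧
          Function.Injective (Function.update v (Fin.last k) x)) := by
  constructor
  · intro v hv hconn
    rintro ⟨x, hadj, hinj, hconn2, a, c, hcyc, hsupp⟩
    set S : Set (Fin (2 * (k + 2))) :=
      Set.range (Function.update v (Fin.last k) x) ∪ {v (Fin.last k)} with hS
    have hxne : x ≠ v (Fin.last k) := fun h => (graphB k).irrefl (h ▸ hadj)
    have hvl_not : v (Fin.last k) ∉ Set.range (Function.update v (Fin.last k) x) := by
      rintro ⟨i, hi⟩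
      by_cases hil : i = Fin.last k
      · subst hil; rw [Function.update_self] at hi; exact hxne hi
      · rw [Function.update_of_ne hil] at hi; exact hil (hv hi)
    have hcard : S.ncard = k + 2 := by
      rw [hS, Set.union_singleton, Set.ncard_insert_of_notMem hvl_not,
        ncard_range_fin _ hinj]
    have hmem : ∀ z : Fin (2 * (k + 2)), z ∈ c.support ↔ z ∈ S := fun z => by
      rw [← hsupp]; exact Iff.rfl
    -- two-neighbor fact tailored to the support
    have hstep : ∀ b ∈ c.support, ∃ x' y' : Fin (2 * (k + 2)), x' ≠ y' ∧
        (graphB k).Adj b x' ∧ (graphB k).Adj b y' ∧ x' ∈ c.support ∧ y' ∈ c.support := by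
      intro b hb
      obtain ⟨x', y', hxy, hx, hy⟩ := cycle_two_nbrs hcyc hb
      exact ⟨x', y', hxy, hx.adj_sub, hy.adj_sub,
        (c.mem_verts_toSubgraph).mp hx.snd_mem, (c.mem_verts_toSubgraph).mp hy.snd_mem⟩
    set Q : ℕ → Prop := fun m => ∃ b : Fin (2 * (k + 2)), b ∈ c.support ∧ b.val = m with hQ
    have hstep1 : ∀ m, 1 ≤ m → m ≤ k + 1 → Q m → Q (m - 1) ∧ Q (m + 1) := by
      rintro m h1 h2 ⟨b, hb, rfl⟩
      obtain ⟨x', y', hxy, hbx, hby, hxs, hys⟩ := hstep b hb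
      have hx := nbr1 hbx h1 h2
      have hy := nbr1 hby h1 h2
      have hne : x'.val ≠ y'.val := fun h => hxy (Fin.ext h)
      constructor
      · rcases hx with h | h
        · exact ⟨x', hxs, h⟩
        · rcases hy with h' | h'
          · exact ⟨y', hys, h'⟩
          · exact absurd (h.trans h'.symm) hne
      · rcases hx with h | h
        · rcases hy with h' | h'
          · exact absurd (h.trans h'.symm) hne
          · exact ⟨y', hys, h'⟩
        · exact ⟨x', hxs, h⟩
    have hstep2 : ∀ m, k + 3 ≤ m → m ≤ 2 * k + 2 → Q m → Q (m - 1) ∧ Q (m + 1) := by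
      rintro m h1 h2 ⟨b, hb, rfl⟩
      obtain ⟨x', y', hxy, hbx, hby, hxs, hys⟩ := hstep b hb
      have hx := nbr2 hbx h1 h2
      have hy := nbr2 hby h1 h2
      have hne : x'.val ≠ y'.val := fun h => hxy (Fin.ext h)
      constructor
      · rcases hx with h | h
        · exact ⟨x', hxs, h⟩
        · rcases hy with h' | h'
          · exact ⟨y', hys, h'⟩
          · exact absurd (h.trans h'.symm) hne
      · rcases hx with h | h
        · rcases hy with h' | h'
          · exact absurd (h.trans h'.symm) hne
          · exact ⟨y', hys, h'⟩
        · exact ⟨x', hxs, h⟩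
    have hstep3 : Q (2 * k + 3) → Q (2 * k + 2) ∧ Q 0 := by
      rintro ⟨b, hb, hbv⟩
      obtain ⟨x', y', hxy, hbx, hby, hxs, hys⟩ := hstep b hb
      have hx := nbr3 hbx hbv
      have hy := nbr3 hby hbv
      have hne : x'.val ≠ y'.val := fun h => hxy (Fin.ext h)
      constructor
      · rcases hx with h | h
        · exact ⟨x', hxs, h⟩
        · rcases hy with h' | h'
          · exact ⟨y', hys, h'⟩
          · exact absurd (h.trans h'.symm) hne
      · rcases hx with h | h
        · rcases hy with h' | h'
          · exact absurd (h.trans h'.symm) hne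
          · exact ⟨y', hys, h'⟩
        · exact ⟨x', hxs, h⟩
    -- there is a vertex in the support which is neither 0 nor k+2
    have hbig : ∃ w ∈ c.support, w.val ≠ 0 ∧ w.val ≠ k + 2 := by
      by_contra hcon
      push_neg at hcon
      have hsub : S ⊆ {(⟨0, by omega⟩ : Fin (2 * (k + 2))), ⟨k + 2, by omega⟩} := by
        intro z hz
        have hz' : z ∈ c.support := (hmem z).2 hz
        by_cases h0 : z.val = 0
        · exact Or.inl (Fin.ext h0)
        · exact Or.inr (Fin.ext (hcon z hz' h0))
      have h1 := Set.ncard_le_ncard hsub (Set.toFinite _)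
      have h2 : ({(⟨0, by omega⟩ : Fin (2 * (k + 2))), ⟨k + 2, by omega⟩} :
          Set (Fin (2 * (k + 2)))).ncard ≤ 2 :=
        (Set.ncard_insert_le _ _).trans (by simp)
      omega
    obtain ⟨w, hwsupp, hw0, hwk2⟩ := hbig
    have hQw : Q w.val := ⟨w, hwsupp, rfl⟩
    have hwlt : w.val < 2 * (k + 2) := w.isLt
    rcases lt_or_ge w.val (k + 2) with hcase | hcase
    · -- w.val ∈ [1, k+1]
      have hdown : ∀ j, j ≤ w.val → Q (w.val - j) := by
        intro j
        induction j with
        | zero => intro _; simpa using hQw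
        | succ j ih =>
          intro hj
          have h1 := ih (by omega)
          have h2 := (hstep1 (w.val - j) (by omega) (by omega) h1).1
          have : w.val - (j + 1) = w.val - j - 1 := by omega
          rw [this]; exact h2
      have hup : ∀ j, w.val + j ≤ k + 2 → Q (w.val + j) := by
        intro j
        induction j with
        | zero => intro _; simpa using hQw
        | succ j ih =>
          intro hj
          have h1 := ih (by omega)
          have h2 := (hstep1 (w.val + j) (by omega) (by omega) h1).2
          have : w.val + (j + 1) = (w.val + j) + 1 := by omega
          rw [this]; exact h2
      have hall : ∀ m, m ≤ k + 2 → Q m := by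
        intro m hm
        rcases le_or_gt m w.val with h | h
        · have := hdown (w.val - m) (by omega)
          have e : w.val - (w.val - m) = m := by omega
          rwa [e] at this
        · have := hup (m - w.val) (by omega)
          have e : w.val + (m - w.val) = m := by omega
          rwa [e] at this
      have hginj : Function.Injective
          (fun i : Fin (k + 3) => (⟨i.val, by have := i.isLt; omega⟩ : Fin (2 * (k + 2)))) := by
        intro i j h
        exact Fin.ext (by simpa using congrArg Fin.val h)
      have hrange : Set.range
          (fun i : Fin (k + 3) => (⟨i.val, by have := i.isLt; omega⟩ : Fin (2 * (k + 2)))) ⊆ S := by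
        rintro z ⟨i, rfl⟩
        obtain ⟨b, hb, hbv⟩ := hall i.val (by have := i.isLt; omega)
        have hbS : b ∈ S := (hmem b).1 hb
        have heq : b = (⟨i.val, by have := i.isLt; omega⟩ : Fin (2 * (k + 2))) := Fin.ext hbv
        rwa [heq] at hbS
      have h1 := ncard_range_fin _ hginj
      have h2 := Set.ncard_le_ncard hrange (Set.toFinite _)
      omega
    · -- w.val ∈ [k+3, 2k+3]
      have hcase' : k + 3 ≤ w.val := by omega
      have hup : ∀ j, w.val + j ≤ 2 * k + 3 → Q (w.val + j) := by
        intro j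
        induction j with
        | zero => intro _; simpa using hQw
        | succ j ih =>
          intro hj
          have h1 := ih (by omega)
          have h2 := (hstep2 (w.val + j) (by omega) (by omega) h1).2
          have : w.val + (j + 1) = (w.val + j) + 1 := by omega
          rw [this]; exact h2
      have htop : Q (2 * k + 3) := by
        have := hup (2 * k + 3 - w.val) (by omega)
        have e : w.val + (2 * k + 3 - w.val) = 2 * k + 3 := by omega
        rwa [e] at this
      have hzero : Q 0 := (hstep3 htop).2
      have hdown : ∀ j, j ≤ k + 1 → Q (2 * k + 3 - j) := by
        intro j
        induction j with
        | zero => intro _; simpa using htop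
        | succ j ih =>
          intro hj
          have h1 := ih (by omega)
          rcases Nat.eq_zero_or_pos j with hj0 | hj0
          · subst hj0
            have := (hstep3 htop).1
            have e : 2 * k + 3 - 1 = 2 * k + 2 := by omega
            rw [show (0 : ℕ) + 1 = 1 from rfl, e]
            exact this
          · have h2 := (hstep2 (2 * k + 3 - j) (by omega) (by omega) h1).1
            have e : 2 * k + 3 - (j + 1) = (2 * k + 3 - j) - 1 := by omega
            rw [e]; exact h2
      have hginj : Function.Injective
          (fun i : Fin (k + 3) => if h : i.val = 0 then (⟨0, by omega⟩ : Fin (2 * (k + 2)))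
            else ⟨k + 1 + i.val, by have := i.isLt; omega⟩) := by
        intro i j h
        by_cases hi : i.val = 0 <;> by_cases hj : j.val = 0 <;>
          simp only [hi, hj, dif_pos, dif_neg, not_false_iff, Fin.mk.injEq] at h <;>
          · apply Fin.ext; omega
      have hrange : Set.range
          (fun i : Fin (k + 3) => if h : i.val = 0 then (⟨0, by omega⟩ : Fin (2 * (k + 2)))
            else ⟨k + 1 + i.val, by have := i.isLt; omega⟩) ⊆ S := by
        rintro z ⟨i, rfl⟩
        by_cases hi : i.val = 0
        · simp only [hi, dif_pos]
          obtain ⟨b, hb, hbv⟩ := hzero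
          have hbS : b ∈ S := (hmem b).1 hb
          have heq : b = (⟨0, by omega⟩ : Fin (2 * (k + 2))) := Fin.ext hbv
          rwa [heq] at hbS
        · simp only [hi, dif_neg, not_false_iff]
          have hiv : i.val ≤ k + 2 := by have := i.isLt; omega
          obtain ⟨b, hb, hbv⟩ : Q (k + 1 + i.val) := by
            have := hdown (2 * k + 3 - (k + 1 + i.val)) (by omega)
            have e : 2 * k + 3 - (2 * k + 3 - (k + 1 + i.val)) = k + 1 + i.val := by omega
            rwa [e] at this
          have hbS : b ∈ S := (hmem b).1 hb
          have heq : b = (⟨k + 1 + i.val, by omega⟩ : Fin (2 * (k + 2))) := Fin.ext hbv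
          rwa [heq] at hbS
      have h1 := ncard_range_fin _ hginj
      have h2 := Set.ncard_le_ncard hrange (Set.toFinite _)
      omega
  · refine ⟨fun i => ⟨i.val, by have := i.isLt; omega⟩, ?_, ?_, ⟨k + 1, by omega⟩, ?_, ?_⟩
    · intro i j h
      exact Fin.ext (by simpa using congrArg Fin.val h)
    · rw [InducesConnected]
      set v : Fin (k + 1) → Fin (2 * (k + 2)) :=
        fun i => ⟨i.val, by have := i.isLt; omega⟩ with hv
      set S := Set.range v with hSdef
      have hmemS : ∀ z : Fin (2 * (k + 2)), z.val ≤ k → z ∈ S := by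
        intro z hz
        exact ⟨⟨z.val, by omega⟩, Fin.ext rfl⟩
      have hvalS : ∀ z : Fin (2 * (k + 2)), z ∈ S → z.val ≤ k := by
        rintro z ⟨i, rfl⟩
        exact Nat.lt_succ_iff.mp i.isLt
      have hz0 : (⟨0, by omega⟩ : Fin (2 * (k + 2))) ∈ S := hmemS _ (Nat.zero_le k)
      have key : ∀ m : ℕ, ∀ z : S, (z : Fin (2 * (k + 2))).val = m →
          ((graphA k).induce S).Reachable z ⟨⟨0, by omega⟩, hz0⟩ := by
        intro m
        induction m with
        | zero =>
          intro z hzv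
          have : z = ⟨⟨0, by omega⟩, hz0⟩ := Subtype.ext (Fin.ext hzv)
          rw [this]
        | succ m ih =>
          intro z hzv
          have hzk : (z : Fin (2 * (k + 2))).val ≤ k := hvalS _ z.2
          have hz' : (⟨m, by omega⟩ : Fin (2 * (k + 2))) ∈ S :=
            hmemS ⟨m, by omega⟩ (show m ≤ k by omega)
          have hadj : ((graphA k).induce S).Adj ⟨⟨m, by omega⟩, hz'⟩ z := by
            simp only [comap_adj, Function.Embedding.coe_subtype]
            rw [graphA, SimpleGraph.fromRel_adj]
            constructor
            · intro hcon
              have := congrArg Fin.val hcon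
              simp at this; omega
            · left; left
              exact ⟨hzv, by omega⟩
          exact (hadj.symm.reachable).trans (ih ⟨⟨m, by omega⟩, hz'⟩ rfl)
      have hne : Nonempty ↥S := ⟨⟨⟨0, by omega⟩, hz0⟩⟩
      constructor
      intro a b
      exact (key _ a rfl).trans (key _ b rfl).symm
    · -- adjacency v(last) = ⟨k,_⟩ to ⟨k+1,_⟩
      rw [graphA, SimpleGraph.fromRel_adj]
      constructor
      · intro hcon
        have := congrArg Fin.val hcon
        simp at this
      · left; left
        exact ⟨rfl, le_refl _⟩
    · -- injectivity of the update
      intro i j h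
      have hval : ∀ i' : Fin (k + 1),
          (Function.update (fun i : Fin (k+1) => (⟨i.val, by have := i.isLt; omega⟩ : Fin (2*(k+2))))
            (Fin.last k) (⟨k + 1, by omega⟩ : Fin (2 * (k + 2))) i').val
          = if i' = Fin.last k then k + 1 else i'.val := by
        intro i'
        by_cases hi' : i' = Fin.last k
        · rw [hi', Function.update_self, if_pos rfl]
        · rw [Function.update_of_ne hi', if_neg hi']
      have h1 := congrArg Fin.val h
      rw [hval i, hval j] at h1
      have hlast : ∀ i' : Fin (k + 1), i' ≠ Fin.last k → i'.val < k := by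
        intro i' hi'
        have h2 := i'.isLt
        have h3 : i'.val ≠ k := fun hc => hi' (Fin.ext (by simp [hc]))
        omega
      by_cases hi : i = Fin.last k <;> by_cases hj : j = Fin.last k <;>
        simp only [hi, hj, if_pos, if_neg, not_false_iff] at h1
      · rw [hi, hj]
      · have := hlast j hj; omega
      · have := hlast i hi; omega
      · exact Fin.ext h1
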